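/- Let q = 2^s, F = 𝔽_{q²}, n = 2q², and let (a₁,b₁),…,(a_n,b_n) be an enumeration of all pairs in F × F with b_k² + b_k = a_k^{q+1}. For a nonnegative integer m let C_m ⊆ F^n be the F-linear span of the vectors ((a_k)^i (b_k)^j)_{k=1,…,n} over all pairs (i,j) of nonnegative integers with j ≤ 1 and 2i + (q+1)j ≤ m. If m < 2q², then every nonzero codeword of C_m has Hamming weight at least 2q² − m. -/

import Mathlib

open Polynomial

private lemma fcmd_g_ne_zero (q : ℕ) (hq2 : 2 ≤ q) (hqe : 2 ∣ q) (F : Type) [Field F]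
    (f0 f1 : F[X]) (hf1 : f1 ≠ 0) :
    f0 ^ 2 + f0 * f1 + X ^ (q + 1) * f1 ^ 2 ≠ 0 := by
  intro hg
  set d0 := f0.natDegree with hd0
  set d1 := f1.natDegree with hd1
  have hne : 2 * d0 ≠ q + 1 + 2 * d1 := by omega
  rcases lt_or_gt_of_ne hne with h | h
  · have h1 : (f0 ^ 2).coeff (q + 1 + 2 * d1) = 0 := by
      apply coeff_eq_zero_of_natDegree_lt
      calc (f0 ^ 2).natDegree ≤ 2 * d0 := by
            exact natDegree_pow_le (p := f0) (n := 2)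
        _ < q + 1 + 2 * d1 := h
    have h2 : (f0 * f1).coeff (q + 1 + 2 * d1) = 0 := by
      apply coeff_eq_zero_of_natDegree_lt
      calc (f0 * f1).natDegree ≤ d0 + d1 := natDegree_mul_le
        _ < q + 1 + 2 * d1 := by omega
    have h3 : (X ^ (q + 1) * f1 ^ 2).coeff (q + 1 + 2 * d1) = f1.leadingCoeff ^ 2 := by
      have he : q + 1 + 2 * d1 = 2 * d1 + (q + 1) := by ring
      rw [he, coeff_X_pow_mul]
      have hnd : (f1 ^ 2).natDegree = 2 * d1 := by rw [natDegree_pow]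
      rw [← hnd, coeff_natDegree, leadingCoeff_pow]
    have := congrArg (fun p => Polynomial.coeff p (q + 1 + 2 * d1)) hg
    simp only [coeff_add, h1, h2, h3, coeff_zero, zero_add] at this
    exact pow_ne_zero 2 (leadingCoeff_ne_zero.mpr hf1) this
  · have hf0 : f0 ≠ 0 := by
      intro h0
      rw [h0] at hd0
      simp [natDegree_zero] at hd0
      omega
    have h1 : (f0 ^ 2).coeff (2 * d0) = f0.leadingCoeff ^ 2 := by
      have hnd : (f0 ^ 2).natDegree = 2 * d0 := by rw [natDegree_pow]
      rw [← hnd, coeff_natDegree, leadingCoeff_pow]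
    have h2 : (f0 * f1).coeff (2 * d0) = 0 := by
      apply coeff_eq_zero_of_natDegree_lt
      calc (f0 * f1).natDegree ≤ d0 + d1 := natDegree_mul_le
        _ < 2 * d0 := by omega
    have h3 : (X ^ (q + 1) * f1 ^ 2).coeff (2 * d0) = 0 := by
      have he : 2 * d0 = (2 * d0 - (q + 1)) + (q + 1) := by omega
      rw [he, coeff_X_pow_mul]
      apply coeff_eq_zero_of_natDegree_lt
      calc (f1 ^ 2).natDegree ≤ 2 * d1 := by
            exact natDegree_pow_le (p := f1) (n := 2)
        _ < 2 * d0 - (q + 1) := by omega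
    have := congrArg (fun p => Polynomial.coeff p (2 * d0)) hg
    simp only [coeff_add, h1, h2, h3, coeff_zero, add_zero, zero_add] at this
    exact pow_ne_zero 2 (leadingCoeff_ne_zero.mpr hf0) this

private lemma fcmd_count (n m : ℕ) (F : Type) [Field F] [DecidableEq F] (g : F[X])
    (hg : g ≠ 0) (hdeg : g.natDegree ≤ m)
    (c : Fin n → F) (a : Fin n → F)
    (hroot : ∀ k, c k = 0 → g.eval (a k) = 0)
    (hpair : ∀ k k', k ≠ k' → a k = a k' → c k = 0 → c k' = 0 → (X - C (a k)) ^ 2 ∣ g)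
    (hfib : ∀ k k' k'', a k = a k' → a k = a k'' → k ≠ k' → k ≠ k'' → k' ≠ k'' → False) :
    (Finset.univ.filter (fun k => c k = 0)).card ≤ m := by
  classical
  set Z := Finset.univ.filter (fun k => c k = 0) with hZ
  have hmemZ : ∀ k, k ∈ Z ↔ c k = 0 := by intro k; simp [hZ]
  set T := Z.image a with hT
  have hcard : Z.card = ∑ x ∈ T, (Z.filter (fun k => a k = x)).card :=
    Finset.card_eq_sum_card_fiberwise (fun k hk => Finset.mem_image_of_mem a hk)
  have hbound : ∀ x ∈ T, (Z.filter (fun k => a k = x)).card ≤ g.roots.count x := by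
    intro x hx
    rw [count_roots]
    obtain ⟨k₀, hk₀, hak₀⟩ := Finset.mem_image.mp hx
    have hx0 : IsRoot g x := by rw [← hak₀]; exact hroot k₀ ((hmemZ k₀).mp hk₀)
    rcases le_or_gt (Z.filter (fun k => a k = x)).card 1 with h | h
    · exact le_trans h ((rootMultiplicity_pos hg).mpr hx0)
    · have h2 : (Z.filter (fun k => a k = x)).card ≤ 2 := by
        by_contra hcon
        push_neg at hcon
        obtain ⟨k₁, k₂, k₃, hk₁, hk₂, hk₃, h12, h13, h23⟩ :=
          Finset.two_lt_card_iff.mp hcon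
        simp only [Finset.mem_filter] at hk₁ hk₂ hk₃
        exact hfib k₁ k₂ k₃ (hk₁.2.trans hk₂.2.symm) (hk₁.2.trans hk₃.2.symm) h12 h13 h23
      obtain ⟨k₁, hk₁, k₂, hk₂, h12⟩ := Finset.one_lt_card.mp h
      simp only [Finset.mem_filter] at hk₁ hk₂
      have hdvd : (X - C x) ^ 2 ∣ g := by
        rw [← hk₁.2]
        exact hpair k₁ k₂ h12 (hk₁.2.trans hk₂.2.symm)
          ((hmemZ k₁).mp hk₁.1) ((hmemZ k₂).mp hk₂.1)
      exact le_trans h2 ((le_rootMultiplicity_iff hg).mpr hdvd)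
  calc Z.card = ∑ x ∈ T, (Z.filter (fun k => a k = x)).card := hcard
    _ ≤ ∑ x ∈ T, g.roots.count x := Finset.sum_le_sum hbound
    _ ≤ ∑ x ∈ g.roots.toFinset, g.roots.count x := by
        apply Finset.sum_le_sum_of_subset
        intro x hx
        obtain ⟨k₀, hk₀, hak₀⟩ := Finset.mem_image.mp hx
        rw [Multiset.mem_toFinset, mem_roots hg]
        rw [← hak₀]; exact hroot k₀ ((hmemZ k₀).mp hk₀)
    _ = Multiset.card g.roots := Multiset.toFinset_sum_count_eq _
    _ ≤ g.natDegree := card_roots' g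
    _ ≤ m := hdeg

private lemma fcmd_succ (q : ℕ) (F : Type) [Field F] (h2 : (2:F) = 0)
    (A B B' : F) (hB : B ^ 2 + B = A ^ (q + 1))
    (hB' : B' ^ 2 + B' = A ^ (q + 1)) (hne : B ≠ B') : B' = B + 1 := by
  have ht : (B + B') * (B + B' - 1) = 0 := by
    linear_combination hB + hB' + (B * B' - B - B' + A ^ (q + 1)) * h2
  rcases mul_eq_zero.mp ht with h | h
  · exact absurd (by linear_combination h - B' * h2) hne
  · linear_combination h - B * h2

theorem first_curve_min_distance (s : ℕ) (hs : 0 < s) (q : ℕ) (hq : q = 2 ^ s)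
    (F : Type) [Field F] [Fintype F] (hF : Fintype.card F = q ^ 2)
    (n : ℕ) (hn : n = 2 * q ^ 2)
    (pt : Fin n → F × F) (hinj : Function.Injective pt)
    (hrange : ∀ p : F × F, p ∈ Set.range pt ↔ p.2 ^ 2 + p.2 = p.1 ^ (q + 1))
    (C : ℕ → Submodule F (Fin n → F))
    (hC : ∀ m : ℕ, C m = Submodule.span F
      {v : Fin n → F | ∃ i j : ℕ, j ≤ 1 ∧ 2 * i + (q + 1) * j ≤ m ∧
        v = fun k => (pt k).1 ^ i * (pt k).2 ^ j})
    (m : ℕ) (hm : m < 2 * q ^ 2) :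
    ∀ c ∈ C m, c ≠ 0 → 2 * q ^ 2 - m ≤ Nat.card {k : Fin n // c k ≠ 0} := by
  classical
  intro c hc hc0
  -- characteristic 2
  have h2 : (2 : F) = 0 := by
    obtain ⟨p, hp⟩ := CharP.exists F
    have hprime : p.Prime := by haveI := hp; exact CharP.char_is_prime F p
    obtain ⟨k, hpk, hcard⟩ := @FiniteField.card F _ _ p hp
    have hdvd : p ∣ Fintype.card F := by rw [hcard]; exact dvd_pow_self p k.2.ne'
    rw [hF, hq, ← pow_mul] at hdvd
    have hp2 : p = 2 :=
      (Nat.prime_dvd_prime_iff_eq hprime Nat.prime_two).mp (hprime.dvd_of_dvd_pow hdvd)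
    subst hp2
    exact_mod_cast CharP.cast_eq_zero F 2
  have hq2 : 2 ≤ q := by
    rw [hq]
    calc 2 = 2 ^ 1 := by norm_num
      _ ≤ 2 ^ s := Nat.pow_le_pow_right (by norm_num) hs
  have hqe : 2 ∣ q := by
    rw [hq]
    exact dvd_pow_self 2 hs.ne'
  -- curve equation at each point
  have hcurve : ∀ k : Fin n, (pt k).2 ^ 2 + (pt k).2 = (pt k).1 ^ (q + 1) :=
    fun k => (hrange (pt k)).mp ⟨k, rfl⟩
  -- b-coordinates above a common a differ by 1
  have hsucc : ∀ k k' : Fin n, k ≠ k' → (pt k).1 = (pt k').1 →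
      (pt k').2 = (pt k).2 + 1 := by
    intro k k' hkk' ha
    have hbne : (pt k).2 ≠ (pt k').2 := by
      intro hb
      exact hkk' (hinj (Prod.ext ha hb))
    exact fcmd_succ q F h2 ((pt k).1) _ _ (hcurve k) (by rw [ha]; exact hcurve k') hbne
  -- extract the defining polynomials
  rw [hC m] at hc
  obtain ⟨f0, f1, h0, h1, hcf⟩ :
      ∃ f0 f1 : F[X], (∀ i, f0.coeff i ≠ 0 → 2 * i ≤ m) ∧
        (∀ i, f1.coeff i ≠ 0 → 2 * i + (q + 1) ≤ m) ∧
        c = fun k => f0.eval (pt k).1 + f1.eval (pt k).1 * (pt k).2 := by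
    clear hc0
    induction hc using Submodule.span_induction with
    | mem v hv =>
      obtain ⟨i, j, hj, hij, rfl⟩ := hv
      interval_cases j
      · exact ⟨X ^ i, 0, fun i' hi' => by
          rw [coeff_X_pow] at hi'
          split_ifs at hi' with h
          · subst h; omega
          · exact absurd rfl hi',
          fun i' hi' => absurd (by simp : coeff (0 : F[X]) i' = 0) hi',
          by funext k; simp⟩
      · exact ⟨0, X ^ i, fun i' hi' => absurd (by simp : coeff (0 : F[X]) i' = 0) hi',
          fun i' hi' => by
          rw [coeff_X_pow] at hi'
          split_ifs at hi' with h
          · subst h; omega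
          · exact absurd rfl hi',
          by funext k; simp⟩
    | zero => exact ⟨0, 0, by simp, by simp, by funext k; simp⟩
    | add x y hx hy ihx ihy =>
      obtain ⟨f0, f1, h0, h1, rfl⟩ := ihx
      obtain ⟨g0, g1, h0', h1', rfl⟩ := ihy
      refine ⟨f0 + g0, f1 + g1, fun i hi => ?_, fun i hi => ?_, by funext k; simp; ring⟩
      · rw [coeff_add] at hi
        by_cases h : f0.coeff i = 0
        · exact h0' i (by rw [h, zero_add] at hi; exact hi)
        · exact h0 i h
      · rw [coeff_add] at hi
        by_cases h : f1.coeff i = 0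
        · exact h1' i (by rw [h, zero_add] at hi; exact hi)
        · exact h1 i h
    | smul r x hx ihx =>
      obtain ⟨f0, f1, h0, h1, rfl⟩ := ihx
      refine ⟨Polynomial.C r * f0, Polynomial.C r * f1, fun i hi => ?_, fun i hi => ?_, by funext k; simp; ring⟩
      · exact h0 i (fun h => by simp [coeff_C_mul, h] at hi)
      · exact h1 i (fun h => by simp [coeff_C_mul, h] at hi)
  -- the auxiliary polynomial g
  set g : F[X] := f0 ^ 2 + f0 * f1 + X ^ (q + 1) * f1 ^ 2 with hgdef
  have hzero : ∀ k, c k = 0 → f0.eval (pt k).1 + f1.eval (pt k).1 * (pt k).2 = 0 := by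
    intro k hk
    rw [hcf] at hk
    exact hk
  have hg : g ≠ 0 := by
    rcases eq_or_ne f1 0 with hf1 | hf1
    · have hf0 : f0 ≠ 0 := by
        intro hf0
        apply hc0
        rw [hcf]
        funext k
        simp [hf0, hf1]
      rw [hgdef, hf1]
      simpa using pow_ne_zero 2 hf0
    · exact fcmd_g_ne_zero q hq2 hqe F f0 f1 hf1
  have hm0 : 2 * f0.natDegree ≤ m := by
    rcases eq_or_ne f0 0 with hf0 | hf0
    · simp [hf0]
    · exact h0 _ (by rwa [coeff_natDegree, leadingCoeff_ne_zero])
  have hdeg : g.natDegree ≤ m := by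
    rcases eq_or_ne f1 0 with hf1 | hf1
    · rw [hgdef, hf1]
      have : f0 ^ 2 + f0 * 0 + X ^ (q + 1) * (0:F[X]) ^ 2 = f0 ^ 2 := by ring
      rw [this, natDegree_pow]
      omega
    · have hm1 : 2 * f1.natDegree + (q + 1) ≤ m :=
        h1 _ (by rwa [coeff_natDegree, leadingCoeff_ne_zero])
      rw [hgdef]
      apply le_trans (natDegree_add_le _ _)
      apply max_le
      · apply le_trans (natDegree_add_le _ _)
        apply max_le
        · rw [natDegree_pow]; omega
        · exact le_trans natDegree_mul_le (by omega)
      · apply le_trans natDegree_mul_le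
        rw [natDegree_X_pow, natDegree_pow]
        omega
  -- roots
  have hroot : ∀ k, c k = 0 → g.eval (pt k).1 = 0 := by
    intro k hk
    have hz := hzero k hk
    have hB := hcurve k
    rw [hgdef]
    simp only [eval_add, eval_mul, eval_pow, eval_X]
    linear_combination (f0.eval (pt k).1 - f1.eval (pt k).1 * (pt k).2 + f1.eval (pt k).1) * hz
      - (f1.eval (pt k).1) ^ 2 * hB + ((f1.eval (pt k).1) ^ 2 * (pt k).2 ^ 2) * h2
  have hpair : ∀ k k', k ≠ k' → (pt k).1 = (pt k').1 → c k = 0 → c k' = 0 →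
      (X - Polynomial.C ((pt k).1)) ^ 2 ∣ g := by
    intro k k' hkk' ha hk hk'
    have hz := hzero k hk
    have hz' := hzero k' hk'
    rw [← ha, hsucc k k' hkk' ha] at hz'
    have hf1 : f1.eval (pt k).1 = 0 := by linear_combination hz' - hz
    have hf0 : f0.eval (pt k).1 = 0 := by linear_combination hz - (pt k).2 * hf1
    have d0 : (X - Polynomial.C ((pt k).1)) ∣ f0 := dvd_iff_isRoot.mpr hf0
    have d1 : (X - Polynomial.C ((pt k).1)) ∣ f1 := dvd_iff_isRoot.mpr hf1
    rw [hgdef]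
    apply dvd_add
    apply dvd_add
    · exact pow_dvd_pow_of_dvd d0 2
    · rw [sq]; exact mul_dvd_mul d0 d1
    · exact Dvd.dvd.mul_left (pow_dvd_pow_of_dvd d1 2) _
  have hfib : ∀ k k' k'' : Fin n, (pt k).1 = (pt k').1 → (pt k).1 = (pt k'').1 →
      k ≠ k' → k ≠ k'' → k' ≠ k'' → False := by
    intro k k' k'' h1' h2' h12 h13 h23
    have e1 := hsucc k k' h12 h1'
    have e2 := hsucc k k'' h13 h2'
    apply h23
    apply hinj
    exact Prod.ext (h1'.symm.trans h2') (e1.trans e2.symm)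
  -- count zeros
  have hZ : (Finset.univ.filter (fun k => c k = 0)).card ≤ m :=
    fcmd_count n m F g hg hdeg c (fun k => (pt k).1) hroot hpair hfib
  -- conclude
  have hsplit := Finset.card_filter_add_card_filter_not
    (s := (Finset.univ : Finset (Fin n))) (p := fun k => c k = 0)
  have hcardn : (Finset.univ : Finset (Fin n)).card = n := Finset.card_univ.trans (Fintype.card_fin n)
  have hNat : Nat.card {k : Fin n // c k ≠ 0} =
      (Finset.univ.filter (fun k => ¬ c k = 0)).card := by
    rw [Nat.card_eq_fintype_card, Fintype.card_subtype]
  omega
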